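/- Let G be a finite group and ∅ ≠ A ⊆ G. Let φ₁, φ₂ : G → ℝ satisfy Σ_{x∈G} φ₁(x) + Σ_{x∈G} φ₂(x) = 0. Then Σ_{a∈A} Σ_{x∈G} φ₁(x)·φ₂(x⁻¹a) ≤ ν(A)·‖φ₁‖₂·‖φ₂‖₂, where ‖φ‖₂ = (Σ_{x∈G} φ(x)²)^{1/2}. -/

import Mathlib

open Finset

namespace BCC

/-! ### Simplicial cochain machinery.

A finite simplicial complex on a linearly ordered finite vertex type `V` is encoded as a
`Finset (Finset V)` of faces (downward closure is assumed as a hypothesis where needed;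
the empty face plays the role of the `(-1)`-dimensional simplex, so that the cochain
complex below is the *augmented* (reduced) one).

A skew-symmetric real-valued function on ordered `j`-simplices is determined by its values
on the increasingly-ordered simplices, so `C^j(X)` is encoded as the space of real functions
on the faces of cardinality `j+1`.  Thus `Cochain X m` is `C^{m-1}(X)`, and `d X m` is the
coboundary `d_{m-1} : C^{m-1}(X) → C^m(X)`; in particular `d X 0` is the augmentation
`d_{-1} : C^{-1}(X) = ℝ → C^0(X)`, `(d_{-1} a)(v) = a`.  `dStar X m` is the adjoint of
`d X m` with respect to the standard inner products `(φ, ψ) = ∑_{σ ∈ X(j)} φ(σ)ψ(σ)`,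
written out explicitly. -/

/-- `C^{m-1}(X)`: real cochains supported on the faces of cardinality `m`. -/
abbrev Cochain {V : Type*} [Fintype V] [LinearOrder V] (X : Finset (Finset V)) (m : ℕ) :
    Type _ :=
  {s : Finset V // s ∈ X ∧ s.card = m} → ℝ

section Ordered
variable {V : Type*} [Fintype V] [LinearOrder V]

/-- The sign `(-1)^i` of the vertex `v` in the increasingly ordered simplex `σ`,
where `i` is the position of `v` in `σ`. -/
noncomputable def sgn (σ : Finset V) (v : V) : ℝ :=
  (-1 : ℝ) ^ (σ.filter fun w => w < v).card

/-- The simplicial coboundary `d_{m-1} : C^{m-1}(X) → C^m(X)`,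
`(dφ)(σ) = ∑_{i} (-1)^i φ(σ_i)`. -/
noncomputable def d (X : Finset (Finset V)) (m : ℕ) :
    Cochain X m →ₗ[ℝ] Cochain X (m + 1) where
  toFun φ := fun σ => ∑ v ∈ σ.1, sgn σ.1 v *
    (if h : σ.1.erase v ∈ X ∧ (σ.1.erase v).card = m then φ ⟨σ.1.erase v, h⟩ else 0)
  map_add' φ ψ := by
    funext σ
    show (∑ v ∈ σ.1, (_ : ℝ)) = (∑ v ∈ σ.1, (_ : ℝ)) + (∑ v ∈ σ.1, (_ : ℝ))
    rw [← Finset.sum_add_distrib]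
    refine Finset.sum_congr rfl fun v hv => ?_
    split
    · show sgn σ.1 v * (φ _ + ψ _) = _; ring
    · ring
  map_smul' c φ := by
    funext σ
    show (∑ v ∈ σ.1, _) = c * (∑ v ∈ σ.1, _)
    rw [Finset.mul_sum]
    refine Finset.sum_congr rfl fun v hv => ?_
    split
    · show sgn σ.1 v * (c * φ _) = _; ring
    · ring

/-- The adjoint `d_{m-1}^* : C^m(X) → C^{m-1}(X)` of the coboundary `d X m` with respect to
the standard inner products, written out explicitly:
`(d^*ψ)(τ) = ∑_{v ∉ τ, τ ∪ {v} ∈ X} ± ψ(τ ∪ {v})`. -/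
noncomputable def dStar (X : Finset (Finset V)) (m : ℕ) :
    Cochain X (m + 1) →ₗ[ℝ] Cochain X m where
  toFun ψ := fun τ => ∑ v ∈ τ.1ᶜ, sgn (insert v τ.1) v *
    (if h : insert v τ.1 ∈ X ∧ (insert v τ.1).card = m + 1 then ψ ⟨insert v τ.1, h⟩ else 0)
  map_add' φ ψ := by
    funext τ
    show (∑ v ∈ τ.1ᶜ, (_ : ℝ)) = (∑ v ∈ τ.1ᶜ, (_ : ℝ)) + (∑ v ∈ τ.1ᶜ, (_ : ℝ))
    rw [← Finset.sum_add_distrib]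
    refine Finset.sum_congr rfl fun v hv => ?_
    split
    · show sgn _ v * (φ _ + ψ _) = _; ring
    · ring
  map_smul' c φ := by
    funext τ
    show (∑ v ∈ τ.1ᶜ, _) = c * (∑ v ∈ τ.1ᶜ, _)
    rw [Finset.mul_sum]
    refine Finset.sum_congr rfl fun v hv => ?_
    split
    · show sgn _ v * (c * φ _) = _; ring
    · ring

/-- The squared norm `‖φ‖² = ∑_{σ ∈ X(j)} φ(σ)²` of a cochain. -/
noncomputable def normSq {X : Finset (Finset V)} {m : ℕ} (φ : Cochain X m) : ℝ :=
  ∑ s, φ s ^ 2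

/-- The reduced `m`-th Laplacian `L_m = d_{m-1} d_{m-1}^* + d_m^* d_m`
acting on `C^m(X) = Cochain X (m+1)`. -/
noncomputable def Lap (X : Finset (Finset V)) (m : ℕ) :
    Cochain X (m + 1) →ₗ[ℝ] Cochain X (m + 1) :=
  (d X m) ∘ₗ (dStar X m) + (dStar X (m + 1)) ∘ₗ (d X (m + 1))

/-- The `m`-th spectral gap `μ_m(X)`: the minimal eigenvalue of the reduced `m`-th
Laplacian `L_m` acting on `C^m(X)`. -/
noncomputable def mu (X : Finset (Finset V)) (m : ℕ) : ℝ :=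
  sInf {μ : ℝ | Module.End.HasEigenvalue (Lap X m) μ}

/-- The dimension of the `j`-th reduced real cohomology `H̃^j(X;ℝ) = ker d_j / im d_{j-1}`
of the augmented cochain complex of `X`. -/
noncomputable def cohomDim (X : Finset (Finset V)) (j : ℕ) : ℕ :=
  Module.finrank ℝ
    (↥(LinearMap.ker (d X (j + 1))) ⧸
      (LinearMap.range (d X j)).comap (LinearMap.ker (d X (j + 1))).subtype)

/-! ### Links and `λ₂` of link graphs -/

/-- The vertex set of the link `lk(X,τ)` of the face `τ`. -/
def linkVerts (X : Finset (Finset V)) (τ : Finset V) : Finset V :=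
  univ.filter (fun v => v ∉ τ ∧ insert v τ ∈ X)

/-- The Dirichlet energy `‖d₀ f‖² = ∑_{{u,v} ∈ lk(X,τ)(1)} (f v - f u)²` of a function `f`
on the vertices of the link graph `lk(X,τ)` (each unordered edge counted once). -/
noncomputable def linkEnergy (X : Finset (Finset V)) (τ : Finset V) (f : V → ℝ) : ℝ :=
  (1 / 2) * ∑ u : V, ∑ v : V,
    if u ≠ v ∧ u ∉ τ ∧ v ∉ τ ∧ insert u (insert v τ) ∈ X then (f v - f u) ^ 2 else 0

/-- The second smallest eigenvalue `λ₂` of the Laplacian of the link graph `lk(X,τ)`,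
via its variational characterization: the infimum of the Rayleigh quotients
`‖d₀ f‖²/‖f‖²` over nonzero functions `f` on the link vertices with `∑_v f(v) = 0`. -/
noncomputable def linkLambda2 (X : Finset (Finset V)) (τ : Finset V) : ℝ :=
  sInf {r : ℝ | ∃ f : V → ℝ, (∀ v, v ∉ linkVerts X τ → f v = 0) ∧ (∑ v, f v) = 0 ∧
    f ≠ 0 ∧ r = linkEnergy X τ f / ∑ v, f v ^ 2}

/-- The localization `φ_τ` of a cochain `φ ∈ C^{m-1}(X)` to the link of a face `τ` with
`|τ| = m - 1` : `φ_τ(v) = φ(vτ)` (expressed through the chosen increasing orientations). -/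
noncomputable def restrictLink (X : Finset (Finset V)) {m : ℕ} (φ : Cochain X m)
    (τ : Finset V) : V → ℝ :=
  fun v => if h : v ∉ τ ∧ insert v τ ∈ X ∧ (insert v τ).card = m then
    sgn (insert v τ) v * φ ⟨insert v τ, h.2.1, h.2.2⟩ else 0

end Ordered

section Graphs
variable {V : Type*} [DecidableEq V]

/-- The link `lk(X,τ)` of a codimension-2 face, as a simple graph on its vertex set. -/
def linkGraph (X : Finset (Finset V)) (τ : Finset V) :
    SimpleGraph {v : V // v ∉ τ ∧ insert v τ ∈ X} where
  Adj u v := u ≠ v ∧ insert u.1 (insert v.1 τ) ∈ X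
  symm := ⟨by
    rintro u v ⟨h1, h2⟩
    exact ⟨h1.symm, by rwa [Finset.insert_comm] at h2⟩⟩
  loopless := ⟨fun u h => h.1 rfl⟩

/-- The bipartite Cayley graph `C_A` on `{1,2} × G` (encoded as `Fin 2 × G`), with an edge
between `(1,x₁)` and `(2,x₂)` whenever `x₁ x₂ ∈ A`. -/
def cayleyGraph (G : Type*) [Group G] [DecidableEq G] (A : Finset G) :
    SimpleGraph (Fin 2 × G) where
  Adj u v := (u.1 = 0 ∧ v.1 = 1 ∧ u.2 * v.2 ∈ A) ∨ (v.1 = 0 ∧ u.1 = 1 ∧ v.2 * u.2 ∈ A)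
  symm := ⟨by tauto⟩
  loopless := ⟨by
    rintro ⟨i, x⟩ (⟨h0, h1, -⟩ | ⟨h0, h1, -⟩) <;> rw [h0] at h1 <;> exact absurd h1 (by decide)⟩

/-- The disjoint union of `ℓ` copies of a graph `H`. -/
def copies (ℓ : ℕ) {α : Type*} (H : SimpleGraph α) : SimpleGraph (Fin ℓ × α) where
  Adj u v := u.1 = v.1 ∧ H.Adj u.2 v.2
  symm := ⟨by rintro u v ⟨h1, h2⟩; exact ⟨h1.symm, h2.symm⟩⟩
  loopless := ⟨fun u h => H.loopless.irrefl u.2 h.2⟩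

end Graphs

/-! ### The complexes `Y_{G,k}` and `Y_{A,k}` -/

/-- The balanced complex `Y_{G,k}`, i.e. the simplicial join `V_1 * ⋯ * V_{k+1}` where
`V_i = {i} × G`: its faces are exactly the subsets of `Fin (k+1) × G` containing at most one
vertex of each colour `i : Fin (k+1)`. -/
def YG (G : Type*) [Fintype G] [DecidableEq G] (k : ℕ) :
    Finset (Finset (Fin (k + 1) × G)) :=
  (univ : Finset (Finset (Fin (k + 1) × G))).filter
    (fun s => ∀ x ∈ s, ∀ y ∈ s, Prod.fst x = Prod.fst y → x = y)

/-- The balanced `k`-dimensional Cayley complex `Y_{A,k}`: the full `(k-1)`-skeleton of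
`Y_{G,k}` together with all `k`-simplices `{(1,x_1),…,(k+1,x_{k+1})}` such that
`x_1 ⋯ x_{k+1} ∈ A` (the ordered product is taken along the colours `1,…,k+1`). -/
def YA (G : Type*) [Group G] [Fintype G] [DecidableEq G] (k : ℕ) (A : Finset G) :
    Finset (Finset (Fin (k + 1) × G)) :=
  (YG G k).filter (fun s => s.card ≤ k ∨
    ∃ x : Fin (k + 1) → G, s = univ.image (fun i => (i, x i)) ∧ (List.ofFn x).prod ∈ A)

/-! ### Unitary representations, `ν(A)` and `D(G)` -/

variable {G : Type*} [Group G]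

/-- A unitary matrix representation `ρ : G → U(d)` is irreducible if `d > 0` and the only
invariant subspaces of `ℂ^d` are `⊥` and `⊤`. -/
def IsIrred {d : ℕ} (ρ : G →* Matrix.unitaryGroup (Fin d) ℂ) : Prop :=
  0 < d ∧ ∀ W : Submodule ℂ (EuclideanSpace ℂ (Fin d)),
    (∀ g : G, ∀ v ∈ W, Matrix.toEuclideanLin (ρ g : Matrix (Fin d) (Fin d) ℂ) v ∈ W) →
      W = ⊥ ∨ W = ⊤

/-- A matrix representation is nontrivial if it is not identically the identity. -/
def IsNontrivialRep {d : ℕ} (ρ : G →* Matrix.unitaryGroup (Fin d) ℂ) : Prop :=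
  ∃ g : G, (ρ g : Matrix (Fin d) (Fin d) ℂ) ≠ 1

/-- The operator (spectral) norm of a complex `d × d` matrix. -/
noncomputable def opNorm {d : ℕ} (M : Matrix (Fin d) (Fin d) ℂ) : ℝ :=
  ‖Matrix.toEuclideanCLM (𝕜 := ℂ) M‖

/-- The Fourier transform `1̂_A(ρ) = ∑_{x ∈ A} ρ(x)` of the indicator of `A` at `ρ`. -/
noncomputable def fourier {d : ℕ} (ρ : G →* Matrix.unitaryGroup (Fin d) ℂ) (A : Finset G) :
    Matrix (Fin d) (Fin d) ℂ :=
  ∑ a ∈ A, (ρ a : Matrix (Fin d) (Fin d) ℂ)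

/-- `ν(A) = max_{ρ ∈ Ĝ₊} ‖1̂_A(ρ)‖`: the supremum of the operator norms `‖∑_{x ∈ A} ρ(x)‖`
over all nontrivial irreducible unitary matrix representations of `G` (this agrees with the
maximum over any complete set `Ĝ₊` of pairwise inequivalent nontrivial irreducible unitary
representations, since equivalent irreducible unitary representations are unitarily
equivalent and hence give the same norm). -/
noncomputable def nu (G : Type*) [Group G] (A : Finset G) : ℝ :=
  sSup {x : ℝ | ∃ (d : ℕ) (ρ : G →* Matrix.unitaryGroup (Fin d) ℂ),
    IsIrred ρ ∧ IsNontrivialRep ρ ∧ x = opNorm (fourier ρ A)}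

/-- Equivalence of two unitary matrix representations: an invertible intertwiner. -/
def RepEquiv {d₁ d₂ : ℕ} (ρ₁ : G →* Matrix.unitaryGroup (Fin d₁) ℂ)
    (ρ₂ : G →* Matrix.unitaryGroup (Fin d₂) ℂ) : Prop :=
  ∃ T : Matrix (Fin d₂) (Fin d₁) ℂ, Function.Bijective T.mulVecLin ∧
    ∀ g : G, T * (ρ₁ g : Matrix (Fin d₁) (Fin d₁) ℂ) = (ρ₂ g : Matrix (Fin d₂) (Fin d₂) ℂ) * T

/-- `(dims, ρs)` is a complete family of irreducible unitary representations of `G`: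
each member is irreducible, they are pairwise inequivalent, and every irreducible unitary
matrix representation of `G` is equivalent to some member.  Such a family realizes `Ĝ`,
and the sum of the degrees of the irreducible representations is `D(G) = ∑ i, dims i`. -/
def IsCompleteIrrepFamily (G : Type*) [Group G] {ι : Type} (dims : ι → ℕ)
    (ρs : ∀ i : ι, G →* Matrix.unitaryGroup (Fin (dims i)) ℂ) : Prop :=
  (∀ i, IsIrred (ρs i)) ∧
  (∀ i j, i ≠ j → ¬ RepEquiv (ρs i) (ρs j)) ∧
  (∀ (d : ℕ) (π : G →* Matrix.unitaryGroup (Fin d) ℂ), IsIrred π → ∃ i, RepEquiv π (ρs i))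

end BCC

open BCC



section FourierEstimateAux

open BCC Finset

namespace FE

variable {G : Type*} [Group G]

def nuSet (G : Type*) [Group G] (A : Finset G) : Set ℝ :=
  {x : ℝ | ∃ (d : ℕ) (ρ : G →* Matrix.unitaryGroup (Fin d) ℂ),
    IsIrred ρ ∧ IsNontrivialRep ρ ∧ x = opNorm (BCC.fourier ρ A)}

lemma nu_eq (A : Finset G) : nu G A = sSup (nuSet G A) := rfl

lemma norm_toEuclideanCLM_unitary_le {d : ℕ} (M : Matrix.unitaryGroup (Fin d) ℂ) :
    ‖Matrix.toEuclideanCLM (𝕜 := ℂ) (M : Matrix (Fin d) (Fin d) ℂ)‖ ≤ 1 := by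
  set T := Matrix.toEuclideanCLM (𝕜 := ℂ) (M : Matrix (Fin d) (Fin d) ℂ) with hT
  have hsT : star T * T = 1 := by
    rw [hT, ← map_star, ← map_mul]
    have : star (M : Matrix (Fin d) (Fin d) ℂ) * (M : Matrix (Fin d) (Fin d) ℂ) = 1 := M.2.1
    rw [this, map_one]
  have h2 : ‖T‖ * ‖T‖ ≤ 1 := by
    rw [← CStarRing.norm_star_mul_self, hsT]
    rw [ContinuousLinearMap.one_def]
    exact ContinuousLinearMap.norm_id_le
  nlinarith [norm_nonneg T]

lemma opNorm_fourier_le {d : ℕ} (ρ : G →* Matrix.unitaryGroup (Fin d) ℂ) (A : Finset G) :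
    opNorm (BCC.fourier ρ A) ≤ A.card := by
  unfold opNorm BCC.fourier
  rw [map_sum]
  calc ‖∑ a ∈ A, Matrix.toEuclideanCLM (𝕜 := ℂ) (ρ a : Matrix (Fin d) (Fin d) ℂ)‖
      ≤ ∑ a ∈ A, ‖Matrix.toEuclideanCLM (𝕜 := ℂ) (ρ a : Matrix (Fin d) (Fin d) ℂ)‖ :=
        norm_sum_le _ _
    _ ≤ ∑ _a ∈ A, 1 := Finset.sum_le_sum fun a _ => norm_toEuclideanCLM_unitary_le (ρ a)
    _ = A.card := by simp

lemma nuSet_bddAbove (A : Finset G) : BddAbove (nuSet G A) := by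
  refine ⟨A.card, fun x hx => ?_⟩
  obtain ⟨d, ρ, -, -, rfl⟩ := hx
  exact opNorm_fourier_le ρ A

lemma le_nu {A : Finset G} {x : ℝ} (hx : x ∈ nuSet G A) : x ≤ nu G A :=
  le_csSup (nuSet_bddAbove A) hx

lemma nu_nonneg (A : Finset G) : 0 ≤ nu G A := by
  rcases Set.eq_empty_or_nonempty (nuSet G A) with h | ⟨x, hx⟩
  · rw [nu_eq, h, Real.sSup_empty]
  · refine le_trans ?_ (le_nu hx)
    obtain ⟨d, ρ, -, -, rfl⟩ := hx
    exact norm_nonneg _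

variable {G : Type*} [Group G]
variable {H : Type*} [NormedAddCommGroup H] [InnerProductSpace ℂ H] [FiniteDimensional ℂ H]

local notation "⟪" x ", " y "⟫" => @inner ℂ _ _ x y

lemma base (A : Finset G) (π : G →* (H ≃ₗᵢ[ℂ] H)) (E : Submodule ℂ H) (hE : E ≠ ⊥)
    (hinv : ∀ g, ∀ v ∈ E, π g v ∈ E)
    (hmin : ∀ U : Submodule ℂ H, U ≤ E → (∀ g, ∀ v ∈ U, π g v ∈ U) → U = ⊥ ∨ U = E)
    (hfix : ∀ v ∈ E, (∀ g, π g v = v) → v = 0)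
    (v : H) (hv : v ∈ E) :
    ‖∑ a ∈ A, π a v‖ ≤ nu G A * ‖v‖ := by
  classical
  set d := Module.finrank ℂ E with hd_def
  have hd : 0 < d := by
    rcases Nat.eq_zero_or_pos d with h | h
    · exact absurd (Submodule.finrank_eq_zero.mp h) hE
    · exact h
  set b : OrthonormalBasis (Fin d) ℂ E := stdOrthonormalBasis ℂ E with hb
  -- restriction of `π g` to `E`
  set πE : G → (E →ₗ[ℂ] E) :=
    fun g => ((π g).toLinearEquiv : H →ₗ[ℂ] H).restrict (hinv g) with hπE
  have hπE_coe : ∀ g (x : E), ((πE g x : E) : H) = π g (x : H) := fun g x => rfl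
  have hπE_comp : ∀ g h : G, πE (g * h) = (πE g) ∘ₗ (πE h) := by
    intro g h
    ext x
    simp only [LinearMap.coe_comp, Function.comp_apply, hπE_coe, map_mul]
    rfl
  have hπE_one : πE 1 = LinearMap.id := by
    ext x
    simp only [hπE_coe, map_one, LinearMap.id_coe, id_eq]
    rfl
  have hπE_inner : ∀ g (x y : E), ⟪πE g x, πE g y⟫ = ⟪x, y⟫ := by
    intro g x y
    rw [Submodule.coe_inner, Submodule.coe_inner, hπE_coe, hπE_coe]
    exact (π g).inner_map_map _ _
  -- the matrix representation
  set ρm : G → Matrix (Fin d) (Fin d) ℂ :=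
    fun g => LinearMap.toMatrix b.toBasis b.toBasis (πE g) with hρm
  have hρm_apply : ∀ g i j, ρm g i j = ⟪b i, πE g (b j)⟫ := by
    intro g i j
    show (LinearMap.toMatrix b.toBasis b.toBasis) (πE g) i j = _
    rw [LinearMap.toMatrix_apply, b.coe_toBasis_repr_apply, b.repr_apply_apply, b.coe_toBasis]
  have hmulvec : ∀ g (x : E) (i : Fin d), b.repr (πE g x) i = (ρm g).mulVec (fun j => b.repr x j) i := by
    intro g x i
    rw [Matrix.mulVec]
    rw [b.repr_apply_apply]
    conv_lhs => rw [← b.sum_repr x]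
    rw [map_sum, inner_sum]
    refine Finset.sum_congr rfl fun j _ => ?_
    rw [map_smul, inner_smul_right]
    beta_reduce
    rw [hρm_apply, mul_comm]
  have hortho : ∀ i j : Fin d, ⟪b i, b j⟫ = if i = j then (1:ℂ) else 0 :=
    fun i j => orthonormal_iff_ite.mp b.orthonormal i j
  have hstar : ∀ g, star (ρm g) * ρm g = 1 := by
    intro g
    ext i j
    rw [Matrix.mul_apply, Matrix.one_apply]
    have : ∀ k, (star (ρm g)) i k * ρm g k j
        = ⟪πE g (b i), b k⟫ * ⟪b k, πE g (b j)⟫ := by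
      intro k
      rw [Matrix.star_apply, hρm_apply, hρm_apply, ← inner_conj_symm (πE g (b i)) (b k)]
      rfl
    simp_rw [this]
    rw [b.sum_inner_mul_inner, hπE_inner, hortho]
  have hmulρ : ∀ g h, ρm (g * h) = ρm g * ρm h := by
    intro g h
    show LinearMap.toMatrix b.toBasis b.toBasis (πE (g*h)) = _
    rw [hπE_comp, LinearMap.toMatrix_comp b.toBasis b.toBasis b.toBasis]
  set ρ : G →* Matrix.unitaryGroup (Fin d) ℂ :=
    MonoidHom.mk' (fun g => ⟨ρm g, Matrix.mem_unitaryGroup_iff'.mpr (hstar g)⟩)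
      (fun g h => Subtype.ext (hmulρ g h)) with hρ
  have hρcoe : ∀ g, (ρ g : Matrix (Fin d) (Fin d) ℂ) = ρm g := fun g => rfl
  have hrepr_eq : ∀ g (x : E), b.repr (πE g x) = Matrix.toEuclideanLin (ρm g) (b.repr x) := by
    intro g x
    ext i
    rw [Matrix.toEuclideanLin_apply]
    rw [PiLp.toLp_apply]
    exact hmulvec g x i
  have hrestr : ∀ g (w : EuclideanSpace ℂ (Fin d)),
      πE g (b.repr.symm w) = b.repr.symm (Matrix.toEuclideanLin (ρm g) w) := by
    intro g w
    apply b.repr.injective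
    rw [hrepr_eq, LinearIsometryEquiv.apply_symm_apply, LinearIsometryEquiv.apply_symm_apply]
  have hirr : IsIrred ρ := by
    refine ⟨hd, fun Wsub hWsub => ?_⟩
    set T : EuclideanSpace ℂ (Fin d) →ₗ[ℂ] H :=
      E.subtype.comp b.repr.symm.toLinearEquiv.toLinearMap with hT
    have hTapp : ∀ w, T w = ((b.repr.symm w : E) : H) := fun w => rfl
    have hTinj : Function.Injective T := by
      intro w1 w2 h12
      rw [hTapp, hTapp] at h12
      exact b.repr.symm.injective (Subtype.ext h12)
    set U : Submodule ℂ H := Wsub.map T with hU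
    have hUE : U ≤ E := by
      rintro u ⟨w, hw, rfl⟩
      exact (b.repr.symm w).2
    have hUinv : ∀ g, ∀ u ∈ U, π g u ∈ U := by
      rintro g u ⟨w, hw, rfl⟩
      refine ⟨Matrix.toEuclideanLin (ρm g) w, ?_, ?_⟩
      · have := hWsub g w hw
        rwa [hρcoe] at this
      · rw [hTapp, hTapp, ← hrestr g w]
        exact (hπE_coe g _).symm
    rcases hmin U hUE hUinv with h | h
    · left
      rw [Submodule.eq_bot_iff]
      intro w hw
      have hTw : T w ∈ U := ⟨w, hw, rfl⟩
      rw [h, Submodule.mem_bot] at hTw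
      exact hTinj (hTw.trans (map_zero T).symm)
    · right
      rw [Submodule.eq_top_iff']
      intro w
      have hmem : ((b.repr.symm w : E) : H) ∈ U := by
        rw [h]; exact (b.repr.symm w).2
      obtain ⟨w', hw', hww⟩ := hmem
      rw [hTapp] at hww
      have hww' : w' = w := b.repr.symm.injective (Subtype.ext hww)
      rwa [hww'] at hw'
  have hnt : IsNontrivialRep ρ := by
    by_contra hcon
    simp only [IsNontrivialRep, not_exists, not_not] at hcon
    have hid : ∀ g (x : E), πE g x = x := by
      intro g x
      have h1 : ρm g = 1 := by rw [← hρcoe g]; exact hcon g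
      have h2 : πE g = LinearMap.id := by
        apply (LinearMap.toMatrix b.toBasis b.toBasis).injective
        rw [LinearMap.toMatrix_id, ← h1]
      rw [h2]
      rfl
    have hEbot : E = ⊥ := by
      rw [Submodule.eq_bot_iff]
      intro x hx
      refine hfix x hx (fun g => ?_)
      have := hπE_coe g ⟨x, hx⟩
      rw [hid] at this
      exact this.symm
    exact hE hEbot
  have hnu : opNorm (BCC.fourier ρ A) ≤ nu G A := le_nu ⟨d, ρ, hirr, hnt, rfl⟩
  set ve : E := ⟨v, hv⟩ with hve
  have hsumcoe : ((∑ a ∈ A, πE a ve : E) : H) = ∑ a ∈ A, π a v := by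
    rw [Submodule.coe_sum]
    exact Finset.sum_congr rfl fun a _ => hπE_coe a ve
  have hrepr_sum : b.repr (∑ a ∈ A, πE a ve)
      = Matrix.toEuclideanLin (BCC.fourier ρ A) (b.repr ve) := by
    have hfour : BCC.fourier ρ A = ∑ a ∈ A, ρm a := by
      unfold BCC.fourier
      exact Finset.sum_congr rfl fun a _ => hρcoe a
    calc b.repr (∑ a ∈ A, πE a ve) = ∑ a ∈ A, b.repr (πE a ve) := map_sum _ _ _
      _ = ∑ a ∈ A, Matrix.toEuclideanLin (ρm a) (b.repr ve) :=
          Finset.sum_congr rfl fun a _ => hrepr_eq a ve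
      _ = Matrix.toEuclideanLin (∑ a ∈ A, ρm a) (b.repr ve) := by
          rw [map_sum Matrix.toEuclideanLin _ A, LinearMap.sum_apply]
      _ = _ := by rw [hfour]
  have hCLM : Matrix.toEuclideanCLM (𝕜 := ℂ) (BCC.fourier ρ A) (b.repr ve)
      = Matrix.toEuclideanLin (BCC.fourier ρ A) (b.repr ve) := rfl
  calc ‖∑ a ∈ A, π a v‖ = ‖(∑ a ∈ A, πE a ve : E)‖ := by rw [← hsumcoe]; rfl
    _ = ‖b.repr (∑ a ∈ A, πE a ve)‖ := (b.repr.norm_map _).symm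
    _ = ‖Matrix.toEuclideanCLM (𝕜 := ℂ) (BCC.fourier ρ A) (b.repr ve)‖ := by
        rw [hrepr_sum, hCLM]
    _ ≤ ‖Matrix.toEuclideanCLM (𝕜 := ℂ) (BCC.fourier ρ A)‖ * ‖b.repr ve‖ :=
        ContinuousLinearMap.le_opNorm _ _
    _ = opNorm (BCC.fourier ρ A) * ‖v‖ := by rw [b.repr.norm_map]; rfl
    _ ≤ nu G A * ‖v‖ := mul_le_mul_of_nonneg_right hnu (norm_nonneg v)

variable {G : Type*} [Group G]
variable {H : Type*} [NormedAddCommGroup H] [InnerProductSpace ℂ H] [FiniteDimensional ℂ H]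


lemma main (A : Finset G) (π : G →* (H ≃ₗᵢ[ℂ] H)) :
    ∀ (n : ℕ) (W : Submodule ℂ H), Module.finrank ℂ W ≤ n →
    (∀ g, ∀ v ∈ W, π g v ∈ W) → (∀ v ∈ W, (∀ g, π g v = v) → v = 0) →
    ∀ v ∈ W, ‖∑ a ∈ A, π a v‖ ≤ nu G A * ‖v‖ := by
  intro n
  induction n with
  | zero =>
    intro W hrank hinv hfix v hv
    have hW : W = ⊥ := Submodule.finrank_eq_zero.mp (Nat.le_zero.mp hrank)
    rw [hW, Submodule.mem_bot] at hv
    subst hv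
    simp [nu_nonneg A]
  | succ n ih =>
    intro W hrank hinv hfix v hv
    by_cases hWbot : W = ⊥
    · rw [hWbot, Submodule.mem_bot] at hv
      subst hv
      simp [nu_nonneg A]
    -- find a minimal invariant nonzero submodule of W
    have hne : ∃ k, ∃ E : Submodule ℂ H, E ≤ W ∧ E ≠ ⊥ ∧
        (∀ g, ∀ x ∈ E, π g x ∈ E) ∧ Module.finrank ℂ E = k :=
      ⟨Module.finrank ℂ W, W, le_refl _, hWbot, hinv, rfl⟩
    classical
    obtain ⟨E, hEW, hEbot, hEinv, hEk⟩ := Nat.find_spec hne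
    have hEmin : ∀ U : Submodule ℂ H, U ≤ E → (∀ g, ∀ x ∈ U, π g x ∈ U) → U = ⊥ ∨ U = E := by
      intro U hUE hUinv
      by_cases hU : U = ⊥
      · exact Or.inl hU
      right
      have h1 : Nat.find hne ≤ Module.finrank ℂ U :=
        Nat.find_min' hne ⟨U, hUE.trans hEW, hU, hUinv, rfl⟩
      exact Submodule.eq_of_le_of_finrank_le hUE (hEk ▸ h1)
    -- orthogonal decomposition
    set W' : Submodule ℂ H := Eᗮ ⊓ W with hW'
    have hW'inv : ∀ g, ∀ x ∈ W', π g x ∈ W' := by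
      intro g x hx
      obtain ⟨hx1, hx2⟩ := Submodule.mem_inf.mp hx
      refine Submodule.mem_inf.mpr ⟨?_, hinv g x hx2⟩
      rw [Submodule.mem_orthogonal] at hx1 ⊢
      intro u hu
      have h1 : π g ((π g⁻¹) u) = u := by
        have hh : π g * π g⁻¹ = 1 := by rw [← map_mul, mul_inv_cancel, map_one]
        calc π g ((π g⁻¹) u) = (π g * π g⁻¹) u := rfl
          _ = u := by rw [hh]; rfl
      rw [← h1, (π g).inner_map_map]
      exact hx1 _ (hEinv g⁻¹ u hu)
    have hW'rank : Module.finrank ℂ W' ≤ n := by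
      have hdisj : E ⊓ W' = ⊥ := by
        rw [eq_bot_iff]
        intro x hx
        obtain ⟨hx1, hx2⟩ := Submodule.mem_inf.mp hx
        obtain ⟨hx3, -⟩ := Submodule.mem_inf.mp hx2
        rw [Submodule.mem_bot]
        exact inner_self_eq_zero.mp (Submodule.inner_right_of_mem_orthogonal hx1 hx3)
      have hsum := Submodule.finrank_sup_add_finrank_inf_eq E W'
      rw [hdisj, finrank_bot, add_zero] at hsum
      have hsup : E ⊔ W' ≤ W := sup_le hEW inf_le_right
      have h2 : Module.finrank ℂ E + Module.finrank ℂ W' ≤ n + 1 :=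
        hsum ▸ le_trans (Submodule.finrank_mono hsup) hrank
      have h3 : 0 < Module.finrank ℂ E := by
        rcases Nat.eq_zero_or_pos (Module.finrank ℂ E) with h | h
        · exact absurd (Submodule.finrank_eq_zero.mp h) hEbot
        · exact h
      omega
    -- decompose v
    set p : H := (Submodule.orthogonalProjection E v : H) with hp
    set w : H := v - p with hw
    have hpE : p ∈ E := (Submodule.orthogonalProjection E v).2
    have hwperp : w ∈ Eᗮ := Submodule.sub_starProjection_mem_orthogonal (K := E) v
    have hwW' : w ∈ W' := Submodule.mem_inf.mpr ⟨hwperp, by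
      rw [hw]
      exact Submodule.sub_mem W hv (hEW hpE)⟩
    have hvpw : v = p + w := by rw [hw]; abel
    have hfixE : ∀ x ∈ E, (∀ g, π g x = x) → x = 0 := fun x hx => hfix x (hEW hx)
    have hbound1 : ‖∑ a ∈ A, π a p‖ ≤ nu G A * ‖p‖ :=
      base A π E hEbot hEinv hEmin hfixE p hpE
    have hbound2 : ‖∑ a ∈ A, π a w‖ ≤ nu G A * ‖w‖ :=
      ih W' hW'rank hW'inv (fun x hx hfx => hfix x (Submodule.mem_inf.mp hx).2 hfx) w hwW'
    have hS1 : (∑ a ∈ A, π a p) ∈ E := Submodule.sum_mem E fun a _ => hEinv a p hpE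
    have hS2 : (∑ a ∈ A, π a w) ∈ Eᗮ :=
      (Submodule.mem_inf.mp (Submodule.sum_mem W' fun a _ => hW'inv a w hwW')).1
    have horth1 : ⟪∑ a ∈ A, π a p, ∑ a ∈ A, π a w⟫ = 0 :=
      (Submodule.mem_orthogonal E _).mp hS2 _ hS1
    have horth2 : ⟪p, w⟫ = 0 := (Submodule.mem_orthogonal E _).mp hwperp _ hpE
    have hsplit : ∑ a ∈ A, π a v = (∑ a ∈ A, π a p) + (∑ a ∈ A, π a w) := by
      rw [← Finset.sum_add_distrib]
      refine Finset.sum_congr rfl fun a _ => ?_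
      rw [hvpw, map_add]
    have hnormv : ‖v‖ ^ 2 = ‖p‖ ^ 2 + ‖w‖ ^ 2 := by
      rw [hvpw]
      simp only [pow_two]
      exact norm_add_sq_eq_norm_sq_add_norm_sq_of_inner_eq_zero p w horth2
    have hnormS : ‖∑ a ∈ A, π a v‖ ^ 2 = ‖∑ a ∈ A, π a p‖ ^ 2 + ‖∑ a ∈ A, π a w‖ ^ 2 := by
      rw [hsplit]
      simp only [pow_two]
      exact norm_add_sq_eq_norm_sq_add_norm_sq_of_inner_eq_zero _ _ horth1
    have hν := nu_nonneg A (G := G)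
    have hsq : ‖∑ a ∈ A, π a v‖ ^ 2 ≤ (nu G A * ‖v‖) ^ 2 := by
      rw [hnormS]
      calc ‖∑ a ∈ A, π a p‖ ^ 2 + ‖∑ a ∈ A, π a w‖ ^ 2
          ≤ (nu G A * ‖p‖) ^ 2 + (nu G A * ‖w‖) ^ 2 := by
            gcongr <;> positivity
        _ = (nu G A) ^ 2 * (‖p‖ ^ 2 + ‖w‖ ^ 2) := by ring
        _ = (nu G A * ‖v‖) ^ 2 := by rw [mul_pow, hnormv]
    have h1 := Real.sqrt_le_sqrt hsq
    rwa [Real.sqrt_sq (norm_nonneg _), Real.sqrt_sq (by positivity)] at h1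

variable (G : Type) [Group G] [Fintype G] [DecidableEq G]

/-- The right regular representation on `ℓ²(G)`. -/
noncomputable def rreg (g : G) : EuclideanSpace ℂ G ≃ₗᵢ[ℂ] EuclideanSpace ℂ G :=
  LinearIsometryEquiv.piLpCongrLeft 2 ℂ ℂ (Equiv.mulRight g⁻¹)

lemma rreg_apply (g : G) (f : EuclideanSpace ℂ G) (x : G) : rreg G g f x = f (x * g) := by
  simp only [rreg, LinearIsometryEquiv.piLpCongrLeft_apply, Equiv.piCongrLeft'_apply]
  rw [Equiv.mulRight_symm, Equiv.coe_mulRight, inv_inv]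

/-- The right regular representation as a monoid hom. -/
noncomputable def πreg : G →* (EuclideanSpace ℂ G ≃ₗᵢ[ℂ] EuclideanSpace ℂ G) :=
  MonoidHom.mk' (fun g => rreg G g) (by
    intro g h
    ext f x
    show rreg G (g * h) f x = rreg G g (rreg G h f) x
    rw [rreg_apply, rreg_apply, rreg_apply, mul_assoc])

lemma πreg_apply (g : G) (f : EuclideanSpace ℂ G) (x : G) : πreg G g f x = f (x * g) :=
  rreg_apply G g f x

/-- The sum functional. -/
noncomputable def sumFun : EuclideanSpace ℂ G →ₗ[ℂ] ℂ where
  toFun f := ∑ x : G, f x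
  map_add' f g := by
    show ∑ x : G, (f x + g x) = _
    rw [Finset.sum_add_distrib]
  map_smul' c f := by
    show ∑ x : G, c * f x = c * ∑ x : G, f x
    rw [Finset.mul_sum]

lemma reg_estimate (A : Finset G) (v : EuclideanSpace ℂ G) (hv : ∑ x : G, v x = 0) :
    ‖∑ a ∈ A, πreg G a v‖ ≤ nu G A * ‖v‖ := by
  refine main A (πreg G) (Fintype.card G) (LinearMap.ker (sumFun G)) ?_ ?_ ?_ v hv
  · calc Module.finrank ℂ (LinearMap.ker (sumFun G))
        ≤ Module.finrank ℂ (EuclideanSpace ℂ G) := Submodule.finrank_le _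
      _ = Fintype.card G := finrank_euclideanSpace
  · intro g f hf
    rw [LinearMap.mem_ker] at hf ⊢
    show ∑ x : G, πreg G g f x = 0
    have : ∀ x : G, πreg G g f x = f (x * g) := πreg_apply G g f
    simp_rw [this]
    rw [← hf]
    exact Fintype.sum_equiv (Equiv.mulRight g) _ _ (fun x => rfl)
  · intro f hf hfix
    have hconst : ∀ x : G, f x = f 1 := by
      intro x
      have h1 : πreg G x f 1 = f 1 := congrArg (fun f : EuclideanSpace ℂ G => f 1) (hfix x)
      rw [πreg_apply, one_mul] at h1
      exact h1
    have h0 : (Fintype.card G : ℂ) * f 1 = 0 := by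
      rw [LinearMap.mem_ker] at hf
      have : ∑ x : G, f x = 0 := hf
      rw [Finset.sum_congr rfl (fun x _ => hconst x)] at this
      simpa [Finset.sum_const, nsmul_eq_mul] using this
    have hf1 : f 1 = 0 := by
      have hcard : (Fintype.card G : ℂ) ≠ 0 := by
        exact_mod_cast Nat.cast_ne_zero.mpr Fintype.card_ne_zero
      exact (mul_eq_zero.mp h0).resolve_left hcard
    ext x
    rw [hconst x, hf1]
    rfl

end FE

end FourierEstimateAux

open FE in
/-- **The key Fourier-analytic estimate (eq. (12) in the paper).**  Let `G` be a finite
group and `∅ ≠ A ⊆ G`.  Let `φ₁, φ₂ : G → ℝ` satisfy `∑_x φ₁(x) + ∑_x φ₂(x) = 0`.  Then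
`∑_{a ∈ A} ∑_{x ∈ G} φ₁(x)·φ₂(x⁻¹a) ≤ ν(A)·‖φ₁‖₂·‖φ₂‖₂`. -/
theorem fourier_estimate
    (G : Type) [Group G] [Fintype G] [DecidableEq G]
    (A : Finset G) (hA : A.Nonempty)
    (φ₁ φ₂ : G → ℝ) (hsum : (∑ x : G, φ₁ x) + (∑ x : G, φ₂ x) = 0) :
    ∑ a ∈ A, ∑ x : G, φ₁ x * φ₂ (x⁻¹ * a) ≤
      nu G A * Real.sqrt (∑ x : G, φ₁ x ^ 2) * Real.sqrt (∑ x : G, φ₂ x ^ 2) := by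
  classical
  set n : ℕ := Fintype.card G with hn
  have hn0 : 0 < (n : ℝ) := by exact_mod_cast Fintype.card_pos
  set s₁ : ℝ := ∑ x : G, φ₁ x with hs₁
  set s₂ : ℝ := ∑ x : G, φ₂ x with hs₂
  have hs : s₂ = -s₁ := by linarith
  set ψ₁ : G → ℝ := fun x => φ₁ x - s₁ / n with hψ₁
  set ψ₂ : G → ℝ := fun x => φ₂ x - s₂ / n with hψ₂
  have hψ₁sum : ∑ x : G, ψ₁ x = 0 := by
    rw [hψ₁]
    rw [Finset.sum_sub_distrib, Finset.sum_const, Finset.card_univ, nsmul_eq_mul]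
    field_simp
    rw [← hs₁, ← hn]; ring
  have hψ₂sum : ∑ x : G, ψ₂ x = 0 := by
    rw [hψ₂]
    rw [Finset.sum_sub_distrib, Finset.sum_const, Finset.card_univ, nsmul_eq_mul]
    field_simp
    rw [← hs₂, ← hn]; ring
  -- reindexing: for each a, summing over x⁻¹ * a is summing over everything
  have hreindex : ∀ (f : G → ℝ) (a : G), ∑ x : G, f (x⁻¹ * a) = ∑ x : G, f x := by
    intro f a
    exact Fintype.sum_equiv ((Equiv.inv G).trans (Equiv.mulRight a)) _ _ (fun x => rfl)
  -- step 1: reduce to the mean-zero parts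
  set B : ℝ := ∑ a ∈ A, ∑ x : G, ψ₁ x * ψ₂ (x⁻¹ * a) with hB
  have hLHS : ∑ a ∈ A, ∑ x : G, φ₁ x * φ₂ (x⁻¹ * a) = B + A.card * (s₁ * s₂ / n) := by
    rw [hB]
    rw [show ((A.card : ℝ)) * (s₁ * s₂ / n) = ∑ _a ∈ A, (s₁*s₂/n) from by
      rw [Finset.sum_const, nsmul_eq_mul]]
    rw [← Finset.sum_add_distrib]
    refine Finset.sum_congr rfl fun a _ => ?_
    have expand : ∀ x : G, φ₁ x * φ₂ (x⁻¹ * a)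
        = ψ₁ x * ψ₂ (x⁻¹ * a) + (s₂/n) * ψ₁ x + (s₁/n) * ψ₂ (x⁻¹ * a) + (s₁/n) * (s₂/n) := by
      intro x
      rw [hψ₁, hψ₂]
      ring
    rw [Finset.sum_congr rfl (fun x _ => expand x)]
    rw [Finset.sum_add_distrib, Finset.sum_add_distrib, Finset.sum_add_distrib,
      ← Finset.mul_sum, ← Finset.mul_sum, hψ₁sum, hreindex ψ₂ a, hψ₂sum,
      Finset.sum_const, Finset.card_univ, nsmul_eq_mul]
    field_simp
    ring
  have hBle : ∑ a ∈ A, ∑ x : G, φ₁ x * φ₂ (x⁻¹ * a) ≤ B := by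
    rw [hLHS, hs]
    have : (A.card : ℝ) * (s₁ * -s₁ / n) ≤ 0 := by
      apply mul_nonpos_of_nonneg_of_nonpos (by positivity)
      apply div_nonpos_of_nonpos_of_nonneg _ hn0.le
      nlinarith [sq_nonneg s₁]
    linarith
  -- step 2: the Fourier bound for the mean-zero parts
  set u : EuclideanSpace ℂ G := WithLp.toLp 2 (fun x => (ψ₁ x⁻¹ : ℂ)) with hu
  set v : EuclideanSpace ℂ G := WithLp.toLp 2 (fun x => (ψ₂ x : ℂ)) with hv
  have hvW : ∑ x : G, v x = 0 := by
    rw [hv]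
    push_cast [← hψ₂sum]
    norm_cast
  have hC := reg_estimate G A v hvW
  set Cv : EuclideanSpace ℂ G := ∑ a ∈ A, πreg G a v with hCv
  have happ : ∀ x : G, (starRingEnd ℂ) (u x) * Cv x
      = (ψ₁ x⁻¹ : ℂ) * ∑ a ∈ A, (ψ₂ (x * a) : ℂ) := by
    intro x
    have h1 : Cv x = ∑ a ∈ A, (ψ₂ (x * a) : ℂ) := by
      rw [hCv]
      have h2 : (∑ a ∈ A, πreg G a v) x = ∑ a ∈ A, (πreg G a v) x :=
        by rw [WithLp.ofLp_sum, Finset.sum_apply]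
      rw [h2]
      exact Finset.sum_congr rfl fun a _ => by rw [πreg_apply, hv]
    rw [h1, hu]
    simp [Complex.conj_ofReal]
  have hre : ∑ x : G, (ψ₁ x⁻¹ : ℂ) * ∑ a ∈ A, (ψ₂ (x * a) : ℂ)
      = ∑ x : G, (ψ₁ x : ℂ) * ∑ a ∈ A, (ψ₂ (x⁻¹ * a) : ℂ) :=
    Fintype.sum_equiv (Equiv.inv G) _ _ (fun x => by simp)
  have hinner : (B : ℂ) = @inner ℂ _ _ u Cv := by
    have h1 : @inner ℂ _ _ u Cv = ∑ x : G, (ψ₁ x⁻¹ : ℂ) * ∑ a ∈ A, (ψ₂ (x * a) : ℂ) := by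
      rw [PiLp.inner_apply]
      simp only [RCLike.inner_apply]
      exact Finset.sum_congr rfl fun x _ => (mul_comm _ _).trans (happ x)
    rw [h1, hre, hB]
    push_cast
    rw [Finset.sum_comm]
    exact Finset.sum_congr rfl fun x _ => (Finset.mul_sum _ _ _).symm
  have hBnorm : B ≤ ‖u‖ * ‖Cv‖ := by
    calc B = (B : ℂ).re := by norm_num
      _ = (@inner ℂ _ _ u Cv).re := by rw [hinner]
      _ ≤ ‖@inner ℂ _ _ u Cv‖ := Complex.re_le_norm _
      _ ≤ ‖u‖ * ‖Cv‖ := norm_inner_le_norm u Cv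
  -- norms
  have hnorm_u : ‖u‖ = Real.sqrt (∑ x : G, ψ₁ x ^ 2) := by
    rw [EuclideanSpace.norm_eq]
    congr 1
    have h1 : ∀ x : G, ‖u x‖ ^ 2 = ψ₁ x⁻¹ ^ 2 := by
      intro x
      show ‖(ψ₁ x⁻¹ : ℂ)‖ ^ 2 = _
      rw [Complex.norm_real, Real.norm_eq_abs, sq_abs]
    rw [Finset.sum_congr rfl (fun x _ => h1 x)]
    exact Fintype.sum_equiv (Equiv.inv G) _ _ (fun x => rfl)
  have hnorm_v : ‖v‖ = Real.sqrt (∑ x : G, ψ₂ x ^ 2) := by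
    rw [EuclideanSpace.norm_eq]
    congr 1
    refine Finset.sum_congr rfl fun x _ => ?_
    show ‖(ψ₂ x : ℂ)‖ ^ 2 = _
    rw [Complex.norm_real, Real.norm_eq_abs, sq_abs]
  have hψφ₁ : ∑ x : G, ψ₁ x ^ 2 ≤ ∑ x : G, φ₁ x ^ 2 := by
    have hexp : ∑ x : G, ψ₁ x ^ 2
        = ∑ x : G, φ₁ x ^ 2 - 2*(s₁/n)*s₁ + n*(s₁/n)^2 := by
      have h3 : ∀ x : G, ψ₁ x ^ 2 = φ₁ x ^ 2 - 2*(s₁/n)*φ₁ x + (s₁/n)^2 := by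
        intro x; rw [hψ₁]; ring
      rw [Finset.sum_congr rfl (fun x _ => h3 x), Finset.sum_add_distrib,
        Finset.sum_sub_distrib, ← Finset.mul_sum, Finset.sum_const, Finset.card_univ,
        nsmul_eq_mul, ← hs₁]
    have h2 : 2*(s₁/n)*s₁ - (n:ℝ)*(s₁/n)^2 = s₁^2/n := by
      field_simp
      ring
    have h4 : 0 ≤ s₁^2/(n:ℝ) := by positivity
    linarith [hexp, h2, h4]
  have hψφ₂ : ∑ x : G, ψ₂ x ^ 2 ≤ ∑ x : G, φ₂ x ^ 2 := by
    have hexp : ∑ x : G, ψ₂ x ^ 2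
        = ∑ x : G, φ₂ x ^ 2 - 2*(s₂/n)*s₂ + n*(s₂/n)^2 := by
      have h3 : ∀ x : G, ψ₂ x ^ 2 = φ₂ x ^ 2 - 2*(s₂/n)*φ₂ x + (s₂/n)^2 := by
        intro x; rw [hψ₂]; ring
      rw [Finset.sum_congr rfl (fun x _ => h3 x), Finset.sum_add_distrib,
        Finset.sum_sub_distrib, ← Finset.mul_sum, Finset.sum_const, Finset.card_univ,
        nsmul_eq_mul, ← hs₂]
    have h2 : 2*(s₂/n)*s₂ - (n:ℝ)*(s₂/n)^2 = s₂^2/n := by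
      field_simp
      ring
    have h4 : 0 ≤ s₂^2/(n:ℝ) := by positivity
    linarith [hexp, h2, h4]
  have hν := nu_nonneg A (G := G)
  calc ∑ a ∈ A, ∑ x : G, φ₁ x * φ₂ (x⁻¹ * a) ≤ B := hBle
    _ ≤ ‖u‖ * ‖Cv‖ := hBnorm
    _ ≤ ‖u‖ * (nu G A * ‖v‖) := mul_le_mul_of_nonneg_left hC (norm_nonneg u)
    _ = nu G A * ‖u‖ * ‖v‖ := by ring
    _ ≤ nu G A * Real.sqrt (∑ x : G, φ₁ x ^ 2) * Real.sqrt (∑ x : G, φ₂ x ^ 2) := by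
        rw [hnorm_u, hnorm_v]
        have e1 := Real.sqrt_le_sqrt hψφ₁
        have e2 := Real.sqrt_le_sqrt hψφ₂
        have p1 : (0:ℝ) ≤ Real.sqrt (∑ x : G, ψ₁ x ^ 2) := Real.sqrt_nonneg _
        have p2 : (0:ℝ) ≤ Real.sqrt (∑ x : G, ψ₂ x ^ 2) := Real.sqrt_nonneg _
        have p3 : (0:ℝ) ≤ Real.sqrt (∑ x : G, φ₁ x ^ 2) := Real.sqrt_nonneg _
        gcongr
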